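/- In the CA instance with students s1 (T(s1) = 2, preference list c1 ≻ c3 ≻ c2) and s2 (T(s2) = 1, preference list c2 ≻ c1) and courses c1 (O(c1) = 1, upper quota 1, list s2 ≻ s1), c2 (O(c2) = 1, upper quota 1, list s1 ≻ s2) and c3 (O(c3) = 2, upper quota 1, list s1), the matching M = {(s1,c3), (s2,c2)} is coalition-stable but not first-coalition-stable: (s1, {c1,c2}) is a first-blocking coalition of M. In particular, coalition stability does not imply first-coalition stability. -/
import Mathlib

open Finset

/-- An instance of the Course Allocation problem: students `S`, courses `C`,
mutual acceptability `acc`, strict preferences of students over (acceptable) courses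
and of courses over (acceptable) students, positive credits, upper quotas and credit limits. -/
structure CA (S C : Type*) where
  acc : S → C → Prop
  sPref : S → C → C → Prop
  cPref : C → S → S → Prop
  credits : C → ℚ
  quota : C → ℕ
  limit : S → ℚ
  credits_pos : ∀ c, 0 < credits c
  sPref_irrefl : ∀ s c, ¬ sPref s c c
  sPref_trans : ∀ s c₁ c₂ c₃, sPref s c₁ c₂ → sPref s c₂ c₃ → sPref s c₁ c₃
  sPref_total : ∀ s c₁ c₂, acc s c₁ → acc s c₂ → c₁ ≠ c₂ → sPref s c₁ c₂ ∨ sPref s c₂ c₁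
  cPref_irrefl : ∀ c s, ¬ cPref c s s
  cPref_trans : ∀ c s₁ s₂ s₃, cPref c s₁ s₂ → cPref c s₂ s₃ → cPref c s₁ s₃
  cPref_total : ∀ c s₁ s₂, acc s₁ c → acc s₂ c → s₁ ≠ s₂ → cPref c s₁ s₂ ∨ cPref c s₂ s₁

section CourseAllocation

variable {S C : Type*} [DecidableEq S] [DecidableEq C]

/-- The set `C_M(s)` of courses assigned to student `s` in assignment `M`. -/
def CM (M : Finset (S × C)) (s : S) : Finset C :=
  (M.filter fun p => p.1 = s).image Prod.snd

/-- The set `S_M(c)` of students assigned to course `c` in assignment `M`. -/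
def SM (M : Finset (S × C)) (c : C) : Finset S :=
  (M.filter fun p => p.2 = c).image Prod.fst

/-- The total number of credits `O(D)` of a set of courses `D`. -/
def CA.O (I : CA S C) (D : Finset C) : ℚ := ∑ c ∈ D, I.credits c

/-- `M` is a matching: all pairs acceptable, credit limits and upper quotas respected. -/
def CA.IsMatching (I : CA S C) (M : Finset (S × C)) : Prop :=
  (∀ p ∈ M, I.acc p.1 p.2) ∧
  (∀ s, I.O (CM M s) ≤ I.limit s) ∧
  (∀ c, (SM M c).card ≤ I.quota c)

/-- Feasibility of a matching with respect to families `F` of feasible course sets. -/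
def Feasible (F : S → Set (Finset C)) (M : Finset (S × C)) : Prop :=
  ∀ s, CM M s ∈ F s

/-- `F` is a family of downward-feasible constraints: every feasible set consists of
acceptable courses, and subsets of feasible sets are feasible. -/
def CA.DownwardFeasible (I : CA S C) (F : S → Set (Finset C)) : Prop :=
  (∀ s, ∀ D ∈ F s, ∀ c ∈ D, I.acc s c) ∧
  (∀ s, ∀ D ∈ F s, ∀ D' ⊆ D, D' ∈ F s)

/-- Absent downward-feasible constraints (every set of courses feasible). -/
def noF : S → Set (Finset C) := fun _ => Set.univ

/-- Condition (1) of all blocking definitions: course `c` is undersubscribed in `M`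
or prefers `s` to one of its assigned students. -/
def CA.Wants (I : CA S C) (M : Finset (S × C)) (s : S) (c : C) : Prop :=
  (SM M c).card < I.quota c ∨ ∃ s' ∈ SM M c, I.cPref c s s'

/-- `(s, c)` is a blocking pair of `M` (w.r.t. feasibility constraints `F`). -/
def CA.BlockingPair (I : CA S C) (F : S → Set (Finset C)) (M : Finset (S × C))
    (s : S) (c : C) : Prop :=
  I.acc s c ∧ (s, c) ∉ M ∧ I.Wants M s c ∧
  ∃ D ⊆ CM M s, (∀ c' ∈ D, I.sPref s c c') ∧
    I.O (CM M s) - I.O D + I.credits c ≤ I.limit s ∧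
    (CM M s \ D) ∪ {c} ∈ F s

def CA.PairStable (I : CA S C) (F : S → Set (Finset C)) (M : Finset (S × C)) : Prop :=
  ∀ s c, ¬ I.BlockingPair F M s c

/-- `(s, c)` is a size-blocking pair of `M`: like a blocking pair, but additionally
the dropped set `D` must satisfy `O(D) ≤ O(c)`. -/
def CA.SizeBlockingPair (I : CA S C) (F : S → Set (Finset C)) (M : Finset (S × C))
    (s : S) (c : C) : Prop :=
  I.acc s c ∧ (s, c) ∉ M ∧ I.Wants M s c ∧
  ∃ D ⊆ CM M s, (∀ c' ∈ D, I.sPref s c c') ∧ I.O D ≤ I.credits c ∧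
    I.O (CM M s) - I.O D + I.credits c ≤ I.limit s ∧
    (CM M s \ D) ∪ {c} ∈ F s

def CA.PairSizeStable (I : CA S C) (F : S → Set (Finset C)) (M : Finset (S × C)) : Prop :=
  ∀ s c, ¬ I.SizeBlockingPair F M s c

/-- `(s, B)` is a blocking coalition of `M`. -/
def CA.BlockingCoalition (I : CA S C) (F : S → Set (Finset C)) (M : Finset (S × C))
    (s : S) (B : Finset C) : Prop :=
  B.Nonempty ∧ (∀ c ∈ B, I.acc s c ∧ (s, c) ∉ M) ∧ (∀ c ∈ B, I.Wants M s c) ∧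
  ∃ D ⊆ CM M s, (∀ c ∈ B, ∀ c' ∈ D, I.sPref s c c') ∧ I.O D ≤ I.O B ∧
    I.O (CM M s) - I.O D + I.O B ≤ I.limit s ∧
    (CM M s \ D) ∪ B ∈ F s

def CA.CoalitionStable (I : CA S C) (F : S → Set (Finset C)) (M : Finset (S × C)) : Prop :=
  ∀ s B, ¬ I.BlockingCoalition F M s B

/-- `(s, B)` is a first-blocking coalition of `M`: as a blocking coalition, except that
`s` need only prefer her most-preferred course of `B` to her most-preferred course of `D`
(equivalently, some course of `B` is preferred to every course of `D`; vacuous if `D = ∅`). -/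
def CA.FirstBlockingCoalition (I : CA S C) (F : S → Set (Finset C)) (M : Finset (S × C))
    (s : S) (B : Finset C) : Prop :=
  B.Nonempty ∧ (∀ c ∈ B, I.acc s c ∧ (s, c) ∉ M) ∧ (∀ c ∈ B, I.Wants M s c) ∧
  ∃ D ⊆ CM M s, (∃ b ∈ B, ∀ c' ∈ D, I.sPref s b c') ∧ I.O D ≤ I.O B ∧
    I.O (CM M s) - I.O D + I.O B ≤ I.limit s ∧
    (CM M s \ D) ∪ B ∈ F s

def CA.FirstCoalitionStable (I : CA S C) (F : S → Set (Finset C)) (M : Finset (S × C)) : Prop :=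
  ∀ s B, ¬ I.FirstBlockingCoalition F M s B

/-- Every course exactly fills its upper quota. -/
def CA.CourseComplete (I : CA S C) (M : Finset (S × C)) : Prop :=
  ∀ c, (SM M c).card = I.quota c

/-- Every student takes as many credits as her credit limit. -/
def CA.StudentComplete (I : CA S C) (M : Finset (S × C)) : Prop :=
  ∀ s, I.O (CM M s) = I.limit s

/-- The size of a matching: total number of credits taken by all students. -/
def CA.size [Fintype S] (I : CA S C) (M : Finset (S × C)) : ℚ :=
  ∑ s : S, I.O (CM M s)

/-- `ml` is a master list of students for the instance `I`: a strict total order on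
students with which every course's preferences are consistent. -/
def CA.MasterList (I : CA S C) (ml : S → S → Prop) : Prop :=
  (∀ s, ¬ ml s s) ∧ (∀ s₁ s₂ s₃, ml s₁ s₂ → ml s₂ s₃ → ml s₁ s₃) ∧
  (∀ s₁ s₂, s₁ ≠ s₂ → ml s₁ s₂ ∨ ml s₂ s₁) ∧
  (∀ c s s', I.acc s c → I.acc s' c → (I.cPref c s s' ↔ ml s s'))

end CourseAllocation
/-- Builds a `CA` instance from rank functions (smaller rank = more preferred), with a fixed
injective tie-breaking that never fires when ranks are distinct on acceptable pairs. -/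
def CA.ofRanks {S C : Type*} (acc : S → C → Prop) (srank : S → C → ℕ) (crank : C → S → ℕ)
    (iS : S → ℕ) (iC : C → ℕ) (hiS : Function.Injective iS) (hiC : Function.Injective iC)
    (credits : C → ℚ) (quota : C → ℕ) (limit : S → ℚ) (hpos : ∀ c, 0 < credits c) :
    CA S C where
  acc := acc
  sPref s c c' := acc s c ∧ acc s c' ∧
    (srank s c < srank s c' ∨ (srank s c = srank s c' ∧ iC c < iC c'))
  cPref c s s' := acc s c ∧ acc s' c ∧
    (crank c s < crank c s' ∨ (crank c s = crank c s' ∧ iS s < iS s'))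
  credits := credits
  quota := quota
  limit := limit
  credits_pos := hpos
  sPref_irrefl := by rintro s c ⟨-, -, h⟩; omega
  sPref_trans := by rintro s c₁ c₂ c₃ ⟨h1, -, ha⟩ ⟨-, h2, hb⟩; exact ⟨h1, h2, by omega⟩
  sPref_total := by
    intro s c₁ c₂ h1 h2 hne
    have hi : iC c₁ ≠ iC c₂ := fun h => hne (hiC h)
    rcases Nat.lt_trichotomy (srank s c₁) (srank s c₂) with h | h | h
    · exact Or.inl ⟨h1, h2, Or.inl h⟩
    · rcases Nat.lt_or_ge (iC c₁) (iC c₂) with h' | h'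
      · exact Or.inl ⟨h1, h2, Or.inr ⟨h, h'⟩⟩
      · exact Or.inr ⟨h2, h1, Or.inr ⟨h.symm, by omega⟩⟩
    · exact Or.inr ⟨h2, h1, Or.inl h⟩
  cPref_irrefl := by rintro c s ⟨-, -, h⟩; omega
  cPref_trans := by rintro c s₁ s₂ s₃ ⟨h1, -, ha⟩ ⟨-, h2, hb⟩; exact ⟨h1, h2, by omega⟩
  cPref_total := by
    intro c s₁ s₂ h1 h2 hne
    have hi : iS s₁ ≠ iS s₂ := fun h => hne (hiS h)
    rcases Nat.lt_trichotomy (crank c s₁) (crank c s₂) with h | h | h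
    · exact Or.inl ⟨h1, h2, Or.inl h⟩
    · rcases Nat.lt_or_ge (iS s₁) (iS s₂) with h' | h'
      · exact Or.inl ⟨h1, h2, Or.inr ⟨h, h'⟩⟩
      · exact Or.inr ⟨h2, h1, Or.inr ⟨h.symm, by omega⟩⟩
    · exact Or.inr ⟨h2, h1, Or.inl h⟩
/-- The CA instance of Statement 9: students `s1 = 0` (limit 2, list `c1 ≻ c3 ≻ c2`),
`s2 = 1` (limit 1, list `c2 ≻ c1`); courses `c1 = 0` (1 credit, quota 1, list `s2 ≻ s1`),
`c2 = 1` (1 credit, quota 1, list `s1 ≻ s2`), `c3 = 2` (2 credits, quota 1, list `s1`). -/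
def I9 : CA (Fin 2) (Fin 3) :=
  CA.ofRanks (fun s c => s = 0 ∨ c ≠ 2)
    ![![0, 2, 1], ![1, 0, 0]]
    ![![1, 0], ![0, 1], ![0, 0]]
    Encodable.encode Encodable.encode Encodable.encode_injective Encodable.encode_injective
    ![1, 1, 2] (fun _ => 1) ![2, 1]
    (by decide)

/-- The matching `M = {(s1,c3), (s2,c2)}`. -/
def M9 : Finset (Fin 2 × Fin 3) := {(0, 2), (1, 1)}


instance {S : Type*} (s : S) (D : Finset (Fin 3)) : Decidable (D ∈ noF (C := Fin 3) s) :=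
  isTrue trivial
instance (s c) : Decidable (I9.acc s c) := by
  unfold I9 CA.ofRanks; dsimp only; infer_instance
instance (s c c') : Decidable (I9.sPref s c c') := by
  unfold I9 CA.ofRanks; dsimp only; infer_instance
instance (c s s') : Decidable (I9.cPref c s s') := by
  unfold I9 CA.ofRanks; dsimp only; infer_instance

instance (M : Finset (Fin 2 × Fin 3)) (s c) : Decidable (I9.Wants M s c) := by
  unfold CA.Wants; infer_instance

lemma I9credits : I9.credits = ![1, 1, 2] := rfl
lemma I9limit : I9.limit = ![2, 1] := rfl
lemma I9quota : I9.quota = fun _ => 1 := rfl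

lemma hO0 : I9.O (∅ : Finset (Fin 3)) = 0 := by simp [CA.O]
lemma hOa : I9.O ({0} : Finset (Fin 3)) = 1 := by simp [CA.O, I9credits]
lemma hOb : I9.O ({1} : Finset (Fin 3)) = 1 := by simp [CA.O, I9credits]
lemma hOc : I9.O ({2} : Finset (Fin 3)) = 2 := by simp [CA.O, I9credits]
lemma hOab : I9.O ({0, 1} : Finset (Fin 3)) = 2 := by
  rw [CA.O, Finset.sum_insert (by decide), Finset.sum_singleton, I9credits]
  norm_num

lemma hCM0 : CM M9 0 = {2} := by decide
lemma hCM1 : CM M9 1 = {1} := by decide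

lemma I9_first : I9.FirstBlockingCoalition noF M9 0 {0, 1} := by
  refine ⟨by decide, by decide, by decide, {2}, by rw [hCM0], ⟨0, by decide, by decide⟩,
    ?_, ?_, trivial⟩
  · rw [hOc, hOab]
  · rw [hCM0, hOc, hOab, I9limit]; norm_num

/-- `M9` is a coalition-stable matching of `I9` which is not
first-coalition-stable: `(s1, {c1, c2})` is a first-blocking coalition.  In particular,
coalition stability does not imply first-coalition stability. -/
theorem I9_coalitionStable_not_firstCoalitionStable :
    I9.IsMatching M9 ∧ I9.CoalitionStable noF M9 ∧
    I9.FirstBlockingCoalition noF M9 0 {0, 1} ∧ ¬ I9.FirstCoalitionStable noF M9 := by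
  refine ⟨⟨by decide, ?_, by decide⟩, ?_, I9_first, fun h => h 0 {0, 1} I9_first⟩
  · intro s
    fin_cases s
    · rw [show ((⟨0, by norm_num⟩ : Fin 2)) = 0 from rfl, hCM0, hOc, I9limit]; norm_num
    · rw [show ((⟨1, by norm_num⟩ : Fin 2)) = 1 from rfl, hCM1, hOb, I9limit]; norm_num
  · rintro s B ⟨hne, hacc, -, D, hD, hpref, hOD, hlim, -⟩
    fin_cases s
    · rw [show ((⟨0, by norm_num⟩ : Fin 2)) = 0 from rfl] at *
      rw [hCM0] at hD hlim
      have hB2 : 2 ∉ B := fun h => (hacc 2 h).2 (by decide)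
      rcases Finset.subset_singleton_iff.1 hD with rfl | rfl
      · -- D = ∅ : credit limit violated
        rw [hO0, hOc, I9limit] at hlim
        have h1 : (0 : ℚ) < I9.O B := by
          obtain ⟨c, hc⟩ := hne
          calc (0:ℚ) < I9.credits c := I9.credits_pos c
            _ ≤ I9.O B := Finset.single_le_sum (fun c _ => (I9.credits_pos c).le) hc
        simp at hlim
        linarith
      · -- D = {2}
        have h0B : 0 ∈ B := by
          by_contra h0
          have hsub : B ⊆ {1} := by
            intro c hc
            fin_cases c
            · exact absurd hc h0
            · exact Finset.mem_singleton_self 1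
            · exact absurd hc hB2
          rcases Finset.subset_singleton_iff.1 hsub with rfl | rfl
          · exact absurd rfl (Finset.nonempty_iff_ne_empty.1 hne)
          · exact absurd (hpref 1 (Finset.mem_singleton_self 1) 2 (Finset.mem_singleton_self 2))
              (by decide)
        -- now 0 ∈ B, 2 ∉ B, so O B ≤ O {0,1} = 2; limit: 2 - 2 + O B ≤ 2 ok?? use hOD? no:
        -- blocking requires ALL of B preferred to 2; 0 ∈ B ok, but if 1 ∈ B contra:
        have h1B : 1 ∉ B := fun h1 =>
          absurd (hpref 1 h1 2 (Finset.mem_singleton_self 2)) (by decide)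
        have hBeq : B = {0} := by
          apply Finset.Subset.antisymm
          · intro c hc
            fin_cases c
            · exact Finset.mem_singleton_self 0
            · exact absurd hc h1B
            · exact absurd hc hB2
          · simpa using h0B
        rw [hBeq, hOa, hOc] at hOD
        norm_num at hOD
    · rw [show ((⟨1, by norm_num⟩ : Fin 2)) = 1 from rfl] at *
      rw [hCM1] at hD hlim
      have hBeq : B = {0} := by
        apply Finset.Subset.antisymm
        · intro c hc
          fin_cases c
          · exact Finset.mem_singleton_self 0
          · exact absurd (hacc 1 hc).2 (by decide)
          · exact absurd (hacc 2 hc).1 (by decide)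
        · obtain ⟨c, hc⟩ := hne
          have : c = 0 := by
            fin_cases c
            · rfl
            · exact absurd (hacc 1 hc).2 (by decide)
            · exact absurd (hacc 2 hc).1 (by decide)
          simpa [this] using hc
      subst hBeq
      rcases Finset.subset_singleton_iff.1 hD with rfl | rfl
      · rw [hO0, hOb, hOa, I9limit] at hlim; norm_num at hlim
      · exact absurd (hpref 0 (Finset.mem_singleton_self 0) 1 (Finset.mem_singleton_self 1))
          (by decide)
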